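/- For all natural numbers n ≥ 1 and k with 1 ≤ k ≤ n, the Narayana numbers satisfy N(n,k+1)·N(n+1,k)·N(n+2,k+2) = N(n,k)·N(n+1,k+2)·N(n+2,k+1). -/

import Mathlib

/-- The Narayana number `N(n,k) = (1/n)·C(n,k)·C(n,k-1)` as a rational number. -/
noncomputable def narayana (n k : ℕ) : ℚ :=
  (Nat.choose n k * Nat.choose n (k-1) : ℚ) / n

theorem narayana_star_of_david (n k : ℕ) (hn : 1 ≤ n) (hk1 : 1 ≤ k) (hkn : k ≤ n) :
    narayana n (k+1) * narayana (n+1) k * narayana (n+2) (k+2) =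
    narayana n k * narayana (n+1) (k+2) * narayana (n+2) (k+1) := by
  rcases eq_or_lt_of_le hkn with h | h
  · subst h
    simp [narayana, Nat.choose_eq_zero_of_lt (by omega : k < k + 1),
      Nat.choose_eq_zero_of_lt (by omega : k + 1 < k + 2)]
  · -- k + 1 ≤ n
    obtain ⟨a, rfl⟩ : ∃ a, k = a + 1 := ⟨k - 1, by omega⟩
    obtain ⟨b, rfl⟩ : ∃ b, n = a + b + 2 := ⟨n - a - 2, by omega⟩
    simp only [narayana, Nat.add_sub_cancel,
      show a + 1 + 2 - 1 = a + 2 from rfl, show a + 1 + 1 - 1 = a + 1 from rfl,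
      show a + b + 2 + 1 = a + b + 3 from rfl, show a + b + 2 + 2 = a + b + 4 from rfl,
      show a + 1 + 2 = a + 3 from rfl, show a + 1 + 1 = a + 2 from rfl]
    rw [Nat.cast_choose ℚ (by omega : a + 2 ≤ a + b + 2),
      Nat.cast_choose ℚ (by omega : a + 1 ≤ a + b + 2),
      Nat.cast_choose ℚ (by omega : a ≤ a + b + 2),
      Nat.cast_choose ℚ (by omega : a + 1 ≤ a + b + 3),
      Nat.cast_choose ℚ (by omega : a ≤ a + b + 3),
      Nat.cast_choose ℚ (by omega : a + 3 ≤ a + b + 3),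
      Nat.cast_choose ℚ (by omega : a + 2 ≤ a + b + 3),
      Nat.cast_choose ℚ (by omega : a + 3 ≤ a + b + 4),
      Nat.cast_choose ℚ (by omega : a + 2 ≤ a + b + 4),
      Nat.cast_choose ℚ (by omega : a + 1 ≤ a + b + 4)]
    have e1 : a + b + 2 - (a + 2) = b := by omega
    have e2 : a + b + 2 - (a + 1) = b + 1 := by omega
    have e3 : a + b + 2 - a = b + 2 := by omega
    have e4 : a + b + 3 - (a + 1) = b + 2 := by omega
    have e5 : a + b + 3 - a = b + 3 := by omega
    have e6 : a + b + 3 - (a + 3) = b := by omega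
    have e7 : a + b + 3 - (a + 2) = b + 1 := by omega
    have e8 : a + b + 4 - (a + 3) = b + 1 := by omega
    have e9 : a + b + 4 - (a + 2) = b + 2 := by omega
    have e10 : a + b + 4 - (a + 1) = b + 3 := by omega
    rw [e1, e2, e3, e4, e5, e6, e7, e8, e9, e10]
    have f : ∀ m : ℕ, ((Nat.factorial m : ℕ) : ℚ) ≠ 0 := fun m =>
      Nat.cast_ne_zero.mpr (Nat.factorial_ne_zero m)
    field_simp
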